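/- Let N \ge 1, a \in Z, D = gcd(a,N), M = N/D, b = a/D. Define V_{a,N} on L^2(Z_N) by (V_{a,N}\psi)(P) = exp(-2\pi i (P-a)^2/N) \psi(P-a). For \eta \in {1,...,D} and l \in {0,...,M-1}, the function \psi_{\eta,l} given by \psi_{\eta,l}(P) = \sqrt{D} exp((2\pi i/N)(-\eta a \nu^2 - \nu l D + a^2 \nu ((M-1)(2M-1) - (\nu-1)(2\nu-1))/6)) when P \equiv \eta + \nu a mod N (for \nu \in {0,...,M-1}), and \psi_{\eta,l}(P) = 0 when P \not\equiv \eta mod D, satisfies V_{a,N} \psi_{\eta,l} = exp(2\pi i \phi_{\eta,l}/N) \psi_{\eta,l} with \phi_{\eta,l} = lD - \eta^2 + \eta a - a^2 (M-1)(2M-1)/6. -/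

import Mathlib

lemma exp_helper (N : ℕ) (hN : (N:ℂ) ≠ 0) (X Y : ℂ) (t : ℤ) (h : X - Y = t * N) :
    Complex.exp (2 * Real.pi * Complex.I * X / N) =
    Complex.exp (2 * Real.pi * Complex.I * Y / N) := by
  have h2 : 2 * (Real.pi:ℂ) * Complex.I * X / N =
      2 * (Real.pi:ℂ) * Complex.I * Y / N + (t:ℂ) * (2 * (Real.pi:ℂ) * Complex.I) := by
    field_simp
    linear_combination h
  rw [h2, Complex.exp_add, Complex.exp_int_mul_two_pi_mul_I, mul_one]

lemma exp_helper2 (N : ℕ) (hN : (N:ℂ) ≠ 0) (Z X Y₁ Y₂ : ℂ) (t : ℤ)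
    (h : -Z^2 + X - Y₁ - Y₂ = t * N) :
    Complex.exp (-(2 * Real.pi * Complex.I) * Z^2 / N + 2 * Real.pi * Complex.I * X / N)
    = Complex.exp (2 * Real.pi * Complex.I * Y₁ / N + 2 * Real.pi * Complex.I * Y₂ / N) := by
  have h1 : -(2 * (Real.pi:ℂ) * Complex.I) * Z^2 / N + 2 * (Real.pi:ℂ) * Complex.I * X / N
      = 2 * (Real.pi:ℂ) * Complex.I * (-Z^2 + X) / N := by ring
  have h2 : 2 * (Real.pi:ℂ) * Complex.I * Y₁ / N + 2 * (Real.pi:ℂ) * Complex.I * Y₂ / N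
      = 2 * (Real.pi:ℂ) * Complex.I * (Y₁ + Y₂) / N := by ring
  rw [h1, h2]
  exact exp_helper N hN _ _ t (by linear_combination h)



/-- The eigenfunction `ψ_{η,l}` of `V_{a,N}`: it is supported on residues
`P ≡ η + ν a (mod N)`, `ν ∈ {0,…,M-1}` (equivalently `P ≡ η mod D`), where it takes
the value `√D e_N(-ηaν² - νlD + a²ν((M-1)(2M-1)-(ν-1)(2ν-1))/6)`, and vanishes
when `P ≢ η mod D`. -/
noncomputable def eigfun (N : ℕ) (a : ℤ) (D M η l : ℕ) : ZMod N → ℂ :=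
  fun P => (Real.sqrt D : ℂ) * ∑ ν ∈ Finset.range M,
    if P = (η : ZMod N) + (ν : ZMod N) * (a : ZMod N) then
      Complex.exp (2 * Real.pi * Complex.I *
        (-((η : ℂ) * (a : ℂ) * (ν : ℂ) ^ 2) - (ν : ℂ) * (l : ℂ) * (D : ℂ) +
          (a : ℂ) ^ 2 * (ν : ℂ) *
            (((M : ℂ) - 1) * (2 * (M : ℂ) - 1) - ((ν : ℂ) - 1) * (2 * (ν : ℂ) - 1)) / 6)
        / (N : ℂ))
    else 0

/-- `ψ_{η,l}` is an eigenfunction of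
`(V_{a,N}ψ)(P) = e_N(-(P-a)²) ψ(P-a)` with eigenphase
`φ_{η,l} = lD - η² + ηa - a²(M-1)(2M-1)/6`. -/
theorem eigfun_is_eigenfunction (N : ℕ) (hN : 0 < N) (a : ℤ)
    (D M : ℕ) (hD : D = Int.gcd a (N : ℤ)) (hM : M = N / D)
    (η : ℕ) (hη : η ∈ Finset.Icc 1 D) (l : ℕ) (hl : l < M) :
    (fun P : ZMod N =>
        Complex.exp (-(2 * Real.pi * Complex.I) * ((P.val : ℂ) - (a : ℂ)) ^ 2 / (N : ℂ)) *
          eigfun N a D M η l (P - (a : ZMod N))) =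
    fun P : ZMod N =>
      Complex.exp (2 * Real.pi * Complex.I *
          ((l : ℂ) * (D : ℂ) - (η : ℂ) ^ 2 + (η : ℂ) * (a : ℂ) -
            (a : ℂ) ^ 2 * (((M : ℂ) - 1) * (2 * (M : ℂ) - 1)) / 6) / (N : ℂ)) *
        eigfun N a D M η l P := by
  haveI : NeZero N := ⟨hN.ne'⟩
  have hNC : (N:ℂ) ≠ 0 := Nat.cast_ne_zero.mpr hN.ne'
  have hDvdA : (D:ℤ) ∣ a := by rw [hD]; exact Int.gcd_dvd_left _ _
  have hDvdN : D ∣ N := by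
    have h1 : (D:ℤ) ∣ (N:ℤ) := by rw [hD]; exact Int.gcd_dvd_right _ _
    exact_mod_cast h1
  obtain ⟨b, hab⟩ := hDvdA
  have hNMD : N = M * D := by rw [hM]; exact (Nat.div_mul_cancel hDvdN).symm
  have hM0 : 0 < M := lt_of_le_of_lt (Nat.zero_le l) hl
  have hMa : ((M:ℕ):ZMod N) * ((a:ℤ):ZMod N) = 0 := by
    have h1 : ((M:ℤ) * a) = b * (N:ℤ) := by rw [hab]; push_cast [hNMD]; ring
    calc ((M:ℕ):ZMod N) * ((a:ℤ):ZMod N) = (((M:ℤ) * a : ℤ) : ZMod N) := by push_cast; ring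
      _ = ((b * (N:ℤ) : ℤ) : ZMod N) := by rw [h1]
      _ = 0 := by push_cast; simp
  have habC : (a:ℂ) = (D:ℂ) * (b:ℂ) := by exact_mod_cast hab
  have hNMDC : (N:ℂ) = (M:ℂ) * (D:ℂ) := by exact_mod_cast hNMD
  funext P
  unfold eigfun
  conv_lhs => rw [mul_left_comm]
  conv_rhs => rw [mul_left_comm]
  congr 1
  rw [Finset.mul_sum, Finset.mul_sum]
  simp_rw [mul_ite, mul_zero, ← Complex.exp_add]
  refine Finset.sum_nbij' (fun ν => (ν+1) % M) (fun μ => (μ + (M-1)) % M)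
    (fun ν _ => Finset.mem_range.mpr (Nat.mod_lt _ hM0))
    (fun μ _ => Finset.mem_range.mpr (Nat.mod_lt _ hM0))
    (fun ν hν => ?_) (fun μ hμ => ?_) (fun ν hν => ?_)
  · beta_reduce
    rw [Nat.mod_add_mod]
    have h1 : ν + 1 + (M-1) = ν + M := by omega
    rw [h1, Nat.add_mod_right, Nat.mod_eq_of_lt (Finset.mem_range.mp hν)]
  · beta_reduce
    rw [Nat.mod_add_mod]
    have h1 : μ + (M-1) + 1 = μ + M := by omega
    rw [h1, Nat.add_mod_right, Nat.mod_eq_of_lt (Finset.mem_range.mp hμ)]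
  · beta_reduce
    have hνM := Finset.mem_range.mp hν
    rcases Nat.lt_or_ge (ν+1) M with hlt | hge
    · -- case μ = ν + 1 ≥ 1
      rw [Nat.mod_eq_of_lt hlt]
      have hcond : (P - ((a:ℤ):ZMod N) = ((η:ℕ):ZMod N) + ((ν:ℕ):ZMod N) * ((a:ℤ):ZMod N)) ↔
          (P = ((η:ℕ):ZMod N) + (((ν+1:ℕ):ℕ):ZMod N) * ((a:ℤ):ZMod N)) := by
        rw [sub_eq_iff_eq_add]
        push_cast
        constructor <;> intro h <;> linear_combination h
      by_cases hc : P = ((η:ℕ):ZMod N) + (((ν+1:ℕ):ℕ):ZMod N) * ((a:ℤ):ZMod N)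
      · rw [if_pos hc, if_pos (hcond.mpr hc)]
        have hdvd : (N:ℤ) ∣ ((P.val:ℤ) - ((η:ℤ) + ((ν:ℤ)+1) * a)) := by
          rw [← ZMod.intCast_zmod_eq_zero_iff_dvd]
          push_cast
          rw [ZMod.natCast_val, ZMod.cast_id, sub_eq_zero, hc]
          push_cast
          ring
        obtain ⟨k, hk⟩ := hdvd
        have hkC : ((P.val:ℕ):ℂ) = (η:ℂ) + ((ν:ℂ)+1) * (a:ℂ) + (N:ℂ) * k := by
          have h2 : (P.val:ℤ) = (η:ℤ) + ((ν:ℤ)+1) * a + (N:ℤ) * k := by linarith [hk]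
          exact_mod_cast h2
        apply exp_helper2 N hNC _ _ _ _ (-(2*(η:ℤ)*k + 2*(ν:ℤ)*a*k + k^2*(N:ℤ)))
        push_cast
        rw [hkC]
        field_simp
        ring
      · rw [if_neg hc, if_neg (fun h => hc (hcond.mp h))]
    · -- case ν = M - 1, μ = 0
      have hν1 : ν + 1 = M := by omega
      rw [hν1, Nat.mod_self]
      have hMcast : ((ν:ℕ):ZMod N) + 1 = ((M:ℕ):ZMod N) := by
        rw [← hν1]; push_cast; ring
      have hcond : (P - ((a:ℤ):ZMod N) = ((η:ℕ):ZMod N) + ((ν:ℕ):ZMod N) * ((a:ℤ):ZMod N)) ↔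
          (P = ((η:ℕ):ZMod N) + (((0:ℕ)):ZMod N) * ((a:ℤ):ZMod N)) := by
        rw [sub_eq_iff_eq_add]
        have key : ((ν:ℕ):ZMod N) * ((a:ℤ):ZMod N) + ((a:ℤ):ZMod N) = 0 := by
          calc ((ν:ℕ):ZMod N) * ((a:ℤ):ZMod N) + ((a:ℤ):ZMod N)
              = (((ν:ℕ):ZMod N) + 1) * ((a:ℤ):ZMod N) := by ring
            _ = ((M:ℕ):ZMod N) * ((a:ℤ):ZMod N) := by rw [hMcast]
            _ = 0 := hMa
        constructor <;> intro h
        · push_cast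
          linear_combination h + key
        · push_cast at h
          linear_combination h - key
      by_cases hc : P = ((η:ℕ):ZMod N) + (((0:ℕ)):ZMod N) * ((a:ℤ):ZMod N)
      · rw [if_pos hc, if_pos (hcond.mpr hc)]
        have hdvd : (N:ℤ) ∣ ((P.val:ℤ) - (η:ℤ)) := by
          rw [← ZMod.intCast_zmod_eq_zero_iff_dvd]
          push_cast
          rw [ZMod.natCast_val, ZMod.cast_id, sub_eq_zero, hc]
          push_cast
          ring
        obtain ⟨k, hk⟩ := hdvd
        have hkC : ((P.val:ℕ):ℂ) = (η:ℂ) + (N:ℂ) * k := by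
          have h2 : (P.val:ℤ) = (η:ℤ) + (N:ℤ) * k := by linarith [hk]
          exact_mod_cast h2
        have hνC : (ν:ℂ) = (M:ℂ) - 1 := by
          have h3 : ((ν:ℂ)) + 1 = (M:ℂ) := by exact_mod_cast congrArg (Nat.cast : ℕ → ℂ) hν1
          linear_combination h3
        apply exp_helper2 N hNC _ _ _ _
          (-((η:ℤ)*b*M + l + 2*((η:ℤ)+((M:ℤ)-1)*a)*(k-b) + (k-b)^2*(N:ℤ)))
        push_cast
        rw [hkC, hνC, habC, hNMDC]
        field_simp
        ring
      · rw [if_neg hc, if_neg (fun h => hc (hcond.mp h))]
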